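/- Let K be a field and let A be the quotient of the free K-algebra on three generators a, x, y by the two-sided ideal generated by a·x − y, a·y, x·a, y·a, x², y², x·y, y·x. Then there is no element z ∈ A such that x · z = y in A. -/

import Mathlib

/-- The set of generators a·x − y, a·y, x·a, y·a, x², y², x·y, y·x of the two-sided ideal,
where a, x, y are the three generators of the free algebra. -/
noncomputable def paperGens (K : Type*) [Field K] : Set (FreeAlgebra K (Fin 3)) :=
  letI a := FreeAlgebra.ι K (0 : Fin 3)
  letI x := FreeAlgebra.ι K (1 : Fin 3)
  letI y := FreeAlgebra.ι K (2 : Fin 3)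
  {a * x - y, a * y, x * a, y * a, x ^ 2, y ^ 2, x * y, y * x}

/-- The relation identifying each ideal generator with 0, so that `RingQuot` of it is the
quotient of the free algebra by the two-sided ideal generated by `paperGens K`. -/
def paperRel (K : Type*) [Field K] :
    FreeAlgebra K (Fin 3) → FreeAlgebra K (Fin 3) → Prop :=
  fun p q => p ∈ paperGens K ∧ q = 0

/-- A = K⟨a,x,y⟩ / ⟨a·x − y, a·y, x·a, y·a, x², y², x·y, y·x⟩. -/
abbrev paperA (K : Type*) [Field K] : Type _ := RingQuot (paperRel K)

/-- The quotient map onto A. -/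
noncomputable def paperMk (K : Type*) [Field K] : FreeAlgebra K (Fin 3) →ₐ[K] paperA K :=
  RingQuot.mkAlgHom K (paperRel K)

noncomputable def paperRep (K : Type*) [Field K] :
    FreeAlgebra K (Fin 3) →ₐ[K] Matrix (Fin 3) (Fin 3) K :=
  FreeAlgebra.lift K ![Matrix.single 0 1 1, Matrix.single 1 2 1,
    Matrix.single 0 2 1]

theorem paperRep_rel (K : Type*) [Field K] {p q : FreeAlgebra K (Fin 3)}
    (h : paperRel K p q) : paperRep K p = paperRep K q := by
  obtain ⟨hp, rfl⟩ := h
  rw [map_zero]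
  simp only [paperGens, Set.mem_insert_iff, Set.mem_singleton_iff] at hp
  rcases hp with rfl|rfl|rfl|rfl|rfl|rfl|rfl|rfl <;>
    simp [paperRep, pow_two, Matrix.single_mul_single_same, Matrix.single_mul_single_of_ne]

/-- There is no z ∈ A with x · z = y. -/
theorem stmt8 (K : Type*) [Field K] :
    ¬ ∃ z : paperA K,
        paperMk K (FreeAlgebra.ι K (1 : Fin 3)) * z
          = paperMk K (FreeAlgebra.ι K (2 : Fin 3)) := by
  rintro ⟨z, hz⟩
  let φ : paperA K →ₐ[K] Matrix (Fin 3) (Fin 3) K :=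
    RingQuot.liftAlgHom K ⟨paperRep K, fun {p q} h => paperRep_rel K h⟩
  have h2 := congrArg φ hz
  rw [map_mul] at h2
  have hφ : ∀ i : Fin 3, φ (paperMk K (FreeAlgebra.ι K i)) = paperRep K (FreeAlgebra.ι K i) :=
    fun i => by simp [φ, paperMk, RingQuot.liftAlgHom_mkAlgHom_apply]
  rw [hφ, hφ] at h2
  have h3 := congrFun (congrFun h2 0) 2
  simp [paperRep, Matrix.mul_apply, Matrix.single] at h3
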